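/- Let a ≤ 0 ≤ b with b − a ≥ 1 and −ab ≤ 1. For an irrational x, define digits by n₀ = ⌊x⌉_{a,b}, x₁ = −1/(x−n₀), and n_{i} = ⌊x_i⌉_{a,b}, x_{i+1} = −1/(x_i−n_i). Then no pair of consecutive digits (n_i, n_{i+1}) can be of the form (p, 1) with p ≥ 1, nor of the form (−p, −1) with p ≥ 1. -/

import Mathlib

/-- The generalized integer part `⌊x⌉_{a,b}`. -/
noncomputable def gfloor (a b x : ℝ) : ℤ :=
  if x < a then ⌊x - a⌋ else if x < b then 0 else ⌊x - b⌋ + 1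

/-- The sequence `x₀ = x`, `x_{i+1} = -1/(x_i - ⌊x_i⌉_{a,b})`. -/
noncomputable def xseq (a b x : ℝ) : ℕ → ℝ
  | 0 => x
  | i + 1 => -1 / (xseq a b x i - (gfloor a b (xseq a b x i) : ℝ))

/-- The digits `n_i = ⌊x_i⌉_{a,b}` of the (a,b)-continued fraction of `x`. -/
noncomputable def dig (a b x : ℝ) (i : ℕ) : ℤ := gfloor a b (xseq a b x i)

lemma xseq_irr (a b : ℝ) {x : ℝ} (hx : Irrational x) : ∀ i, Irrational (xseq a b x i)
  | 0 => hx
  | i + 1 => by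
    have h := (xseq_irr a b hx i).sub_intCast (gfloor a b (xseq a b x i))
    have h2 : Irrational (xseq a b x i - (gfloor a b (xseq a b x i) : ℝ))⁻¹ := h.inv
    simpa [xseq, neg_div, one_div] using h2.neg

lemma gfloor_pos_bounds {a b y : ℝ} (h : 1 ≤ gfloor a b y) :
    b - 1 ≤ y - gfloor a b y ∧ y - gfloor a b y < b := by
  by_cases hya : y < a
  · exfalso
    simp only [gfloor, if_pos hya] at h
    have h' : (1 : ℝ) ≤ y - a := by exact_mod_cast (Int.le_floor.1 h)
    linarith
  by_cases hyb : y < b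
  · exfalso; simp [gfloor, hya, hyb] at h
  · have hg : gfloor a b y = ⌊y - b⌋ + 1 := by simp [gfloor, hya, hyb]
    rw [hg]
    have h1 := Int.floor_le (y - b)
    have h2 := Int.lt_floor_add_one (y - b)
    push_cast
    constructor <;> linarith

lemma gfloor_neg_bounds {a b y : ℝ} (hb : 0 ≤ b) (h : gfloor a b y ≤ -1) :
    a ≤ y - gfloor a b y ∧ y - gfloor a b y < a + 1 := by
  by_cases hya : y < a
  · have hg : gfloor a b y = ⌊y - a⌋ := by simp [gfloor, hya]
    rw [hg]
    have h1 := Int.floor_le (y - a)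
    have h2 := Int.lt_floor_add_one (y - a)
    constructor <;> linarith
  by_cases hyb : y < b
  · exfalso; simp [gfloor, hya, hyb] at h
  · exfalso
    have hg : gfloor a b y = ⌊y - b⌋ + 1 := by simp [gfloor, hya, hyb]
    rw [hg] at h
    have : (0 : ℤ) ≤ ⌊y - b⌋ := Int.floor_nonneg.2 (by linarith [not_lt.1 hyb])
    omega

lemma gfloor_ne_one {a b t : ℝ} (ha : a ≤ 0) (hb : 0 ≤ b) (ht : t ≠ 0)
    (h1 : b - 1 ≤ t) (h2 : t < b) : gfloor a b (-1 / t) ≠ 1 := by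
  have hmain : -1 / t = 1 / (-t) := by ring
  rcases lt_or_gt_of_ne ht with htneg | htpos
  · -- t < 0, so -1/t ≥ 1 + b
    have hmt : 0 < -t := by linarith
    have hkey : (1 + b) * (-t) ≤ 1 := by nlinarith
    have hx' : (1 + b) ≤ -1 / t := by
      rw [hmain, le_div_iff₀ hmt]; linarith
    have hnlt1 : ¬ (-1 / t < a) := by linarith
    have hnlt2 : ¬ (-1 / t < b) := by linarith
    simp only [gfloor, if_neg hnlt1, if_neg hnlt2]
    have hfl : (1 : ℤ) ≤ ⌊-1 / t - b⌋ := Int.le_floor.2 (by push_cast; linarith)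
    omega
  · -- t > 0, so -1/t < 0 ≤ b
    have hx' : -1 / t < 0 := by
      rw [hmain]
      exact div_neg_of_pos_of_neg one_pos (by linarith)
    simp only [gfloor]
    split_ifs with hc1 hc2
    · intro hcon
      have h1' : (1 : ℝ) ≤ -1 / t - a := by
        have := Int.floor_le (-1 / t - a)
        rw [hcon] at this
        exact_mod_cast this
      linarith
    · omega
    · exact absurd (by linarith : -1 / t < b) hc2

lemma gfloor_ne_neg_one {a b t : ℝ} (ha : a ≤ 0) (hb : 0 ≤ b) (ht : t ≠ 0)
    (h1 : a ≤ t) (h2 : t < a + 1) : gfloor a b (-1 / t) ≠ -1 := by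
  have hmain : -1 / t = 1 / (-t) := by ring
  rcases lt_or_gt_of_ne ht with htneg | htpos
  · -- t < 0, so -1/t > 0 ≥ a
    have hx' : 0 < -1 / t := by
      rw [hmain]; exact div_pos one_pos (by linarith)
    simp only [gfloor, if_neg (by linarith : ¬ (-1 / t < a))]
    split_ifs with hc2
    · omega
    · have : (0 : ℤ) ≤ ⌊-1 / t - b⌋ := Int.floor_nonneg.2 (by linarith [not_lt.1 hc2])
      omega
  · -- t > 0, so -1/t < a - 1
    have hx' : -1 / t < a - 1 := by
      rw [div_lt_iff₀ htpos]
      nlinarith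
    simp only [gfloor, if_pos (by linarith : -1 / t < a)]
    intro hcon
    have : (-1 : ℝ) ≤ -1 / t - a := by
      have := Int.floor_le (-1 / t - a); rw [hcon] at this; exact_mod_cast this
    linarith

theorem no_forbidden_pairs (a b x : ℝ) (ha : a ≤ 0) (hb : 0 ≤ b)
    (hab : 1 ≤ b - a) (hprod : -(a * b) ≤ 1) (hx : Irrational x) (i : ℕ) :
    ¬(1 ≤ dig a b x i ∧ dig a b x (i + 1) = 1) ∧
      ¬(dig a b x i ≤ -1 ∧ dig a b x (i + 1) = -1) := by
  have hirr := xseq_irr a b hx i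
  have htirr : Irrational (xseq a b x i - (gfloor a b (xseq a b x i) : ℝ)) :=
    hirr.sub_intCast _
  have ht0 : (xseq a b x i - (gfloor a b (xseq a b x i) : ℝ)) ≠ 0 := htirr.ne_zero
  constructor
  · rintro ⟨h1, h2⟩
    obtain ⟨hl, hr⟩ := gfloor_pos_bounds h1
    exact gfloor_ne_one ha hb ht0 hl hr (by simpa [dig, xseq] using h2)
  · rintro ⟨h1, h2⟩
    obtain ⟨hl, hr⟩ := gfloor_neg_bounds hb h1
    exact gfloor_ne_neg_one ha hb ht0 hl hr (by simpa [dig, xseq] using h2)
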